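/- Let (S,T) be a medium. For any token τ and any state S, exactly one of τ ∈ Ŝ and τ̃ ∈ Ŝ holds, where Ŝ is the content of S and τ̃ is the reverse of τ. Consequently, the contents of any two states are equinumerous: |Ŝ| = |V̂| for all states S, V. -/

import Mathlib

open scoped Classical symmDiff

universe u

namespace Media

variable {S : Type u}

/-- The state obtained by applying the message (string of tokens) `m` to the state `s`. -/
def apply (s : S) (m : List (S → S)) : S :=
  m.foldl (fun x τ => τ x) s

/-- The sequence of states `S₀ = s, S₁, …, Sₙ` produced by the message `m` from the state `s`. -/
def produced (s : S) (m : List (S → S)) : List S :=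
  m.scanl (fun x τ => τ x) s

/-- `τ'` is a reverse of the token `τ`. -/
def IsReverse (τ τ' : S → S) : Prop :=
  ∀ P Q : S, P ≠ Q → (τ P = Q ↔ τ' Q = P)

/-- The message `m` is stepwise effective for the state `s`. -/
def StepwiseEffective (s : S) (m : List (S → S)) : Prop :=
  List.Chain' (· ≠ ·) (produced s m)

/-- The message `m` is consistent: it does not contain both a token and its reverse. -/
def Consistent (m : List (S → S)) : Prop :=
  ∀ τ ∈ m, ∀ τ' ∈ m, ¬ IsReverse τ τ'

/-- The message `m` is concise for the state `s`. -/
def Concise (s : S) (m : List (S → S)) : Prop :=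
  StepwiseEffective s m ∧ Consistent m ∧ m.Nodup

/-- The message `m` is vacuous: its indices can be partitioned into pairs of
mutually reverse tokens. -/
def Vacuous (m : List (S → S)) : Prop :=
  ∃ f : Fin m.length → Fin m.length, Function.Involutive f ∧
    (∀ i, f i ≠ i) ∧ ∀ i, IsReverse (m.get i) (m.get (f i))

/-- The message `m` is closed for the state `s`. -/
def Closed (s : S) (m : List (S → S)) : Prop :=
  StepwiseEffective s m ∧ apply s m = s

/-- `(S, T)` is a medium: a token system satisfying axioms [M1] and [M2]. -/
def IsMedium (T : Set (S → S)) : Prop :=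
  (∃ a b : S, a ≠ b) ∧ T.Nonempty ∧ (∀ τ ∈ T, τ ≠ id) ∧
  (∀ P Q : S, P ≠ Q →
    ∃ m : List (S → S), (∀ τ ∈ m, τ ∈ T) ∧ Concise P m ∧ apply P m = Q) ∧
  (∀ (P : S) (m : List (S → S)), (∀ τ ∈ m, τ ∈ T) → Closed P m → Vacuous m)

end Media

namespace Media

variable {S : Type u}

/-- The content of a state: all tokens occurring in at least one concise message
producing that state. -/
def stateContent (T : Set (S → S)) (s : S) : Set (S → S) :=
  {τ | ∃ (W : S) (m : List (S → S)),
    (∀ σ ∈ m, σ ∈ T) ∧ Concise W m ∧ apply W m = s ∧ τ ∈ m}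

end Media


namespace Media

variable {S : Type u} {T : Set (S → S)}

theorem apply_nil (s : S) : apply s [] = s := rfl
theorem apply_cons (s : S) (τ : S → S) (l : List (S → S)) : apply s (τ :: l) = apply (τ s) l := rfl
theorem apply_append (s : S) (l₁ l₂ : List (S → S)) : apply s (l₁ ++ l₂) = apply (apply s l₁) l₂ := by
  simp [apply, List.foldl_append]

theorem produced_cons (s : S) (τ : S → S) (l : List (S → S)) :
    produced s (τ :: l) = s :: produced (τ s) l := List.scanl_cons

theorem se_nil (s : S) : StepwiseEffective s [] := by
  simp [StepwiseEffective, produced, List.Chain', List.isChain_singleton]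

theorem se_cons (s : S) (τ : S → S) (l : List (S → S)) :
    StepwiseEffective s (τ :: l) ↔ s ≠ τ s ∧ StepwiseEffective (τ s) l := by
  unfold StepwiseEffective
  rw [produced_cons]
  cases l with
  | nil => simp [produced, List.Chain', List.isChain_pair, List.isChain_singleton]
  | cons σ r => rw [produced_cons]; unfold List.Chain'; rw [List.isChain_cons_cons, ← produced_cons]

theorem se_append (s : S) (l₁ l₂ : List (S → S)) :
    StepwiseEffective s (l₁ ++ l₂) ↔
      StepwiseEffective s l₁ ∧ StepwiseEffective (apply s l₁) l₂ := by
  induction l₁ generalizing s with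
  | nil => simp [se_nil, apply_nil]
  | cons τ r ih =>
      rw [List.cons_append, se_cons, se_cons, apply_cons, ih, and_assoc]

theorem IsReverse.symm {τ σ : S → S} (h : IsReverse τ σ) : IsReverse σ τ := by
  intro P Q hPQ
  exact (h Q P hPQ.symm).symm

theorem reverse_unique {τ σ₁ σ₂ : S → S} (h₁ : IsReverse τ σ₁) (h₂ : IsReverse τ σ₂) :
    σ₁ = σ₂ := by
  funext Q
  by_cases h : σ₁ Q = Q
  · by_contra h2
    rw [h] at h2
    have hne : σ₂ Q ≠ Q := fun hc => h2 hc.symm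
    have : τ (σ₂ Q) = Q := (h₂ (σ₂ Q) Q hne).mpr rfl
    have : σ₁ Q = σ₂ Q := (h₁ (σ₂ Q) Q hne).mp this
    rw [h] at this
    exact hne this.symm
  · have : τ (σ₁ Q) = Q := (h₁ (σ₁ Q) Q h).mpr rfl
    exact ((h₂ (σ₁ Q) Q h).mp this).symm

/-- count via Fin-indexed filter -/
theorem count_eq_card_filter (c : List (S → S)) (τ : S → S) :
    c.count τ = (Finset.univ.filter fun i : Fin c.length => c.get i = τ).card := by
  induction c with
  | nil => simp
  | cons x l ih =>
      rw [List.count_cons, Finset.card_filter]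
      simp only [List.length_cons]
      rw [Fin.sum_univ_succ]
      simp only [List.get_cons_zero, List.get_eq_getElem, Fin.val_succ, List.getElem_cons_succ]
      simp only [← List.get_eq_getElem]
      rw [← Finset.card_filter, ← ih]
      rw [add_comm]
      congr 1
      simp [beq_iff_eq]
      by_cases hx : x = τ <;> simp [hx]

theorem count_eq_of_vacuous {c : List (S → S)} (hv : Vacuous c) {τ τ' : S → S}
    (h : IsReverse τ τ') : c.count τ = c.count τ' := by
  obtain ⟨f, hinv, -, hrev⟩ := hv
  rw [count_eq_card_filter, count_eq_card_filter]
  apply Finset.card_bij (fun i _ => f i)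
  · intro i hi
    simp only [Finset.mem_filter, Finset.mem_univ, true_and] at hi ⊢
    have := hrev i
    rw [hi] at this
    exact reverse_unique this h
  · intro i hi j hj hij
    exact hinv.injective hij
  · intro j hj
    simp only [Finset.mem_filter, Finset.mem_univ, true_and] at hj
    refine ⟨f j, ?_, hinv j⟩
    simp only [Finset.mem_filter, Finset.mem_univ, true_and]
    have := hrev j
    rw [hj] at this
    exact reverse_unique this h.symm

variable {T : Set (S → S)}

theorem exists_moved {τ : S → S} (hM : IsMedium T) (hτ : τ ∈ T) : ∃ p : S, τ p ≠ p := by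
  by_contra h
  push_neg at h
  exact hM.2.2.1 τ hτ (funext h)

/-- Every token of a medium has a reverse in T. -/
theorem hasReverse (hM : IsMedium T) {τ : S → S} (hτ : τ ∈ T) :
    ∃ τ' ∈ T, IsReverse τ τ' := by
  obtain ⟨p, hp⟩ := exists_moved hM hτ
  obtain ⟨m, hmT, ⟨hSE, -, -⟩, happ⟩ := hM.2.2.2.1 (τ p) p hp
  have hclosed : Closed p (τ :: m) := by
    constructor
    · rw [se_cons]; exact ⟨fun h => hp h.symm, hSE⟩
    · rw [apply_cons]; exact happ
  have hvac := hM.2.2.2.2 p (τ :: m) ?_ hclosed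
  · obtain ⟨f, hinv, hne, hrev⟩ := hvac
    set i0 : Fin (τ :: m).length := ⟨0, Nat.succ_pos _⟩ with hi0
    obtain ⟨k, hk⟩ : ∃ k : ℕ, (f i0).val = k + 1 := by
      cases h : (f i0).val with
      | zero => exact absurd (Fin.ext h) (hne i0)
      | succ k => exact ⟨k, rfl⟩
    have hklt : k < m.length := by
      have := (f i0).isLt
      simp only [List.length_cons] at this
      omega
    refine ⟨m.get ⟨k, hklt⟩, hmT _ (List.get_mem m _), ?_⟩
    have := hrev i0
    have hget : (τ :: m).get (f i0) = m.get ⟨k, hklt⟩ := by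
      have : f i0 = ⟨k + 1, by simpa using Nat.succ_lt_succ hklt⟩ := Fin.ext hk
      rw [this]
      simp [List.get_eq_getElem]
    rw [hget] at this
    exact this
  · intro σ hσ
    rcases List.mem_cons.mp hσ with h | h
    · rw [h]; exact hτ
    · exact hmT σ h

theorem no_self_reverse (hM : IsMedium T) {τ : S → S} (hτ : τ ∈ T) : ¬ IsReverse τ τ := by
  intro hself
  obtain ⟨p, hp⟩ := exists_moved hM hτ
  obtain ⟨m, hmT, ⟨hSE, hCons, hNodup⟩, happ⟩ := hM.2.2.2.1 p (τ p) (fun h => hp h.symm)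
  have hτm : τ ∉ m := fun h => hCons τ h τ h hself
  have hback : τ (τ p) = p := (hself p (τ p) (fun h => hp h.symm)).mp rfl
  have hclosed : Closed p (m ++ [τ]) := by
    constructor
    · rw [se_append, happ, se_cons]
      exact ⟨hSE, fun h => hp (h ▸ hback), se_nil _⟩
    · rw [apply_append, happ, apply_cons, apply_nil, hback]
  have hvac := hM.2.2.2.2 p (m ++ [τ]) ?_ hclosed
  · obtain ⟨f, hinv, hne, hrev⟩ := hvac
    have hlen : (m ++ [τ]).length = m.length + 1 := by simp
    set iL : Fin (m ++ [τ]).length := ⟨m.length, by simp⟩ with hiL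
    have hgetL : (m ++ [τ]).get iL = τ := by
      simp [List.get_eq_getElem, hiL]
    have hlt : (f iL).val < m.length := by
      have h1 : (f iL).val < m.length + 1 := hlen ▸ (f iL).isLt
      rcases Nat.lt_succ_iff_lt_or_eq.mp h1 with h | h
      · exact h
      · exact absurd (Fin.ext h) (hne iL)
    have hgetf : (m ++ [τ]).get (f iL) = m.get ⟨(f iL).val, hlt⟩ := by
      simp [List.get_eq_getElem, List.getElem_append_left, hlt]
    have := hrev iL
    rw [hgetL, hgetf] at this
    have : m.get ⟨(f iL).val, hlt⟩ = τ := (reverse_unique this hself)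
    exact hτm (this ▸ List.get_mem m _)
  · intro σ hσ
    rcases List.mem_append.mp hσ with h | h
    · exact hmT σ h
    · rw [List.mem_singleton.mp h]; exact hτ

noncomputable def rev (T : Set (S → S)) : (S → S) → (S → S) := fun σ =>
  if h : ∃ ρ ∈ T, IsReverse σ ρ then h.choose else σ

theorem rev_spec (hM : IsMedium T) {σ : S → S} (hσ : σ ∈ T) :
    rev T σ ∈ T ∧ IsReverse σ (rev T σ) := by
  have h : ∃ ρ ∈ T, IsReverse σ ρ := hasReverse hM hσ
  rw [rev, dif_pos h]
  exact ⟨h.choose_spec.1, h.choose_spec.2⟩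

/-- Reversing a stepwise-effective message. -/
theorem rev_se (hM : IsMedium T) :
    ∀ (m : List (S → S)) (W : S), (∀ σ ∈ m, σ ∈ T) → StepwiseEffective W m →
      StepwiseEffective (apply W m) ((m.map (rev T)).reverse) ∧
        apply (apply W m) ((m.map (rev T)).reverse) = W := by
  intro m
  induction m with
  | nil => intro W _ _; exact ⟨se_nil _, rfl⟩
  | cons σ rest ih =>
      intro W hT hSE
      rw [se_cons] at hSE
      obtain ⟨hW, hSE'⟩ := hSE
      have hσT := hT σ (List.mem_cons_self)
      obtain ⟨hrT, hrRev⟩ := rev_spec hM hσT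
      obtain ⟨ih1, ih2⟩ := ih (σ W) (fun ρ hρ => hT ρ (List.mem_cons_of_mem σ hρ)) hSE'
      have hlist : ((σ :: rest).map (rev T)).reverse
          = (rest.map (rev T)).reverse ++ [rev T σ] := by simp
      have hback : rev T σ (σ W) = W := (hrRev W (σ W) hW).mp rfl
      rw [apply_cons, hlist]
      constructor
      · rw [se_append, ih2, se_cons]
        refine ⟨ih1, fun hx => ?_, se_nil _⟩
        rw [hback] at hx
        exact hW hx.symm
      · rw [apply_append, ih2, apply_cons, apply_nil, hback]

theorem mem_content_T {s : S} {τ : S → S} (h : τ ∈ stateContent T s) : τ ∈ T := by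
  obtain ⟨W, m, hmT, -, -, hτ⟩ := h
  exact hmT τ hτ

theorem count_map_rev (hM : IsMedium T) {τ τ' : S → S} (hτ : τ ∈ T)
    (h : IsReverse τ τ') (m : List (S → S)) (hmT : ∀ σ ∈ m, σ ∈ T) :
    (m.map (rev T)).count τ = m.count τ' := by
  induction m with
  | nil => simp
  | cons σ rest ih =>
      have hσT := hmT σ (List.mem_cons_self)
      have ih' := ih (fun ρ hρ => hmT ρ (List.mem_cons_of_mem σ hρ))
      have key : rev T σ = τ ↔ σ = τ' := by
        constructor
        · intro hg
          obtain ⟨-, hrRev⟩ := rev_spec hM hσT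
          rw [hg] at hrRev
          exact reverse_unique hrRev.symm h
        · intro hg
          subst hg
          obtain ⟨-, hrRev⟩ := rev_spec hM hσT
          exact reverse_unique hrRev h.symm
      simp only [List.map_cons, List.count_cons, ih']
      congr 1
      simp only [beq_iff_eq]
      by_cases hc : σ = τ'
      · rw [if_pos (key.mpr hc), if_pos hc]
      · rw [if_neg (fun hx => hc (key.mp hx)), if_neg hc]

/-- Not both a token and its reverse in a content. -/
theorem not_both (hM : IsMedium T) {τ τ' : S → S} (hτ : τ ∈ T) (hτ' : τ' ∈ T)
    (h : IsReverse τ τ') (s : S) :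
    ¬ (τ ∈ stateContent T s ∧ τ' ∈ stateContent T s) := by
  rintro ⟨⟨W, m, hmT, ⟨hSE, hCons, hNodup⟩, happ, hτm⟩,
          ⟨W', m', hmT', ⟨hSE', hCons', hNodup'⟩, happ', hτm'⟩⟩
  -- reverse of m'
  set r : List (S → S) := (m'.map (rev T)).reverse with hr
  obtain ⟨hrSE, hrApp⟩ := rev_se hM m' W' hmT' hSE'
  rw [happ'] at hrSE hrApp
  rw [← hr] at hrSE hrApp
  -- connecting message n from W' to W
  obtain ⟨n, hnT, hnCons, hnNodup, hnSE, hnApp⟩ :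
      ∃ n : List (S → S), (∀ σ ∈ n, σ ∈ T) ∧ Consistent n ∧ n.Nodup ∧
        StepwiseEffective W' n ∧ apply W' n = W := by
    by_cases hWW : W' = W
    · exact ⟨[], by simp, fun a ha => absurd ha (List.not_mem_nil (a := a)), List.nodup_nil,
        se_nil W', by rw [apply_nil, hWW]⟩
    · obtain ⟨n, hnT, ⟨h1, h2, h3⟩, h4⟩ := hM.2.2.2.1 W' W hWW
      exact ⟨n, hnT, h2, h3, h1, h4⟩
  set c : List (S → S) := m ++ (r ++ n) with hc
  have hcT : ∀ σ ∈ c, σ ∈ T := by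
    intro σ hσ
    rcases List.mem_append.mp hσ with h1 | h1
    · exact hmT σ h1
    rcases List.mem_append.mp h1 with h2 | h2
    · rw [hr] at h2
      obtain ⟨ρ, hρ, hρ2⟩ := List.mem_map.mp (List.mem_reverse.mp h2)
      rw [← hρ2]
      exact (rev_spec hM (hmT' ρ hρ)).1
    · exact hnT σ h2
  have hclosed : Closed W c := by
    constructor
    · rw [hc, se_append, se_append, happ, hrApp]
      exact ⟨hSE, hrSE, hnSE⟩
    · rw [hc, apply_append, apply_append, happ, hrApp, hnApp]
  have hvac := hM.2.2.2.2 W c hcT hclosed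
  have hcount := count_eq_of_vacuous hvac h
  have c1 : m.count τ = 1 := List.count_eq_one_of_mem hNodup hτm
  have c2 : r.count τ = 1 := by
    rw [hr, List.count_reverse, count_map_rev hM hτ h m' hmT',
      List.count_eq_one_of_mem hNodup' hτm']
  have c3 : m.count τ' = 0 := List.count_eq_zero.mpr (fun hx => hCons τ hτm τ' hx h)
  have c4 : r.count τ' = 0 := by
    rw [hr, List.count_reverse, count_map_rev hM hτ' h.symm m' hmT']
    exact List.count_eq_zero.mpr (fun hx => hCons' τ' hτm' τ hx h.symm)
  have c5 : n.count τ' ≤ 1 := List.nodup_iff_count_le_one.mp hnNodup τ'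
  rw [hc, List.count_append, List.count_append, List.count_append, List.count_append,
    c1, c2, c3, c4] at hcount
  omega

/-- At least one of a token and its reverse is in each content. -/
theorem at_least_one (hM : IsMedium T) {τ τ' : S → S} (hτ : τ ∈ T) (hτ' : τ' ∈ T)
    (h : IsReverse τ τ') (s : S) :
    τ ∈ stateContent T s ∨ τ' ∈ stateContent T s := by
  obtain ⟨p, hp⟩ := exists_moved hM hτ
  have hpq : p ≠ τ p := fun hx => hp hx.symm
  have hτ'q : τ' (τ p) = p := (h p (τ p) hpq).mp rfl
  have hsingle : ∀ (σ : S → S), σ ∈ T → ∀ x : S, x ≠ σ x → Concise x [σ] := by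
    intro σ hσ x hx
    refine ⟨?_, ?_, List.nodup_singleton σ⟩
    · rw [se_cons]; exact ⟨hx, se_nil _⟩
    · intro a ha b hb
      rw [List.mem_singleton.mp ha, List.mem_singleton.mp hb]
      exact no_self_reverse hM hσ
  by_cases hsq : s = τ p
  · left
    exact ⟨p, [τ], by simpa using hτ, hsingle τ hτ p hpq, by simp [apply_cons, apply_nil, hsq],
      List.mem_singleton_self τ⟩
  by_cases hsp : s = p
  · right
    refine ⟨τ p, [τ'], by simpa using hτ', hsingle τ' hτ' (τ p) ?_, ?_, List.mem_singleton_self τ'⟩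
    · rw [hτ'q]; exact fun hx => hpq hx.symm
    · rw [apply_cons, apply_nil, hτ'q, hsp]
  · -- s distinct from p and τ p
    obtain ⟨m, hmT, ⟨hSE, hCons, hNodup⟩, happ⟩ := hM.2.2.2.1 (τ p) s (fun hx => hsq hx.symm)
    by_cases hτm : τ ∈ m
    · left; exact ⟨τ p, m, hmT, ⟨hSE, hCons, hNodup⟩, happ, hτm⟩
    by_cases hτ'm : τ' ∈ m
    · right; exact ⟨τ p, m, hmT, ⟨hSE, hCons, hNodup⟩, happ, hτ'm⟩
    · left
      refine ⟨p, τ :: m, ?_, ⟨?_, ?_, ?_⟩, ?_, List.mem_cons_self⟩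
      · intro σ hσ
        rcases List.mem_cons.mp hσ with h1 | h1
        · rw [h1]; exact hτ
        · exact hmT σ h1
      · rw [se_cons]; exact ⟨hpq, hSE⟩
      · intro a ha b hb hab
        rcases List.mem_cons.mp ha with h1 | h1 <;> rcases List.mem_cons.mp hb with h2 | h2
        · rw [h1, h2] at hab; exact no_self_reverse hM hτ hab
        · rw [h1] at hab
          exact hτ'm ((reverse_unique hab h) ▸ h2)
        · rw [h2] at hab
          exact hτ'm ((reverse_unique hab.symm h) ▸ h1)
        · exact hCons a h1 b h2 hab
      · exact List.nodup_cons.mpr ⟨hτm, hNodup⟩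
      · rw [apply_cons]; exact happ

theorem xor_content (hM : IsMedium T) {τ τ' : S → S} (hτ : τ ∈ T) (hτ' : τ' ∈ T)
    (h : IsReverse τ τ') (s : S) :
    Xor' (τ ∈ stateContent T s) (τ' ∈ stateContent T s) := by
  rcases at_least_one hM hτ hτ' h s with h1 | h1
  · exact Or.inl ⟨h1, fun h2 => not_both hM hτ hτ' h s ⟨h1, h2⟩⟩
  · exact Or.inr ⟨h1, fun h2 => not_both hM hτ hτ' h s ⟨h2, h1⟩⟩

theorem rev_rev (hM : IsMedium T) {σ : S → S} (hσ : σ ∈ T) : rev T (rev T σ) = σ := by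
  obtain ⟨h1, h2⟩ := rev_spec hM hσ
  obtain ⟨h3, h4⟩ := rev_spec hM h1
  exact reverse_unique h4 h2.symm

noncomputable def contentEquiv (hM : IsMedium T) (s v : S) :
    ↥(stateContent T s) ≃ ↥(stateContent T v) where
  toFun := fun ⟨σ, hσ⟩ =>
    if hv : σ ∈ stateContent T v then ⟨σ, hv⟩
    else ⟨rev T σ, by
      have hσT := mem_content_T hσ
      obtain ⟨h1, h2⟩ := rev_spec hM hσT
      rcases at_least_one hM hσT h1 h2 v with hx | hx
      · exact absurd hx hv
      · exact hx⟩
  invFun := fun ⟨σ, hσ⟩ =>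
    if hs : σ ∈ stateContent T s then ⟨σ, hs⟩
    else ⟨rev T σ, by
      have hσT := mem_content_T hσ
      obtain ⟨h1, h2⟩ := rev_spec hM hσT
      rcases at_least_one hM hσT h1 h2 s with hx | hx
      · exact absurd hx hs
      · exact hx⟩
  left_inv := by
    rintro ⟨σ, hσ⟩
    have hσT := mem_content_T hσ
    obtain ⟨h1, h2⟩ := rev_spec hM hσT
    by_cases hv : σ ∈ stateContent T v
    · simp only [dif_pos hv, dif_pos hσ]
    · simp only [dif_neg hv]
      have hrs : rev T σ ∉ stateContent T s :=
        fun hx => not_both hM hσT h1 h2 s ⟨hσ, hx⟩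
      simp only [dif_neg hrs, Subtype.mk.injEq]
      exact rev_rev hM hσT
  right_inv := by
    rintro ⟨σ, hσ⟩
    have hσT := mem_content_T hσ
    obtain ⟨h1, h2⟩ := rev_spec hM hσT
    by_cases hs : σ ∈ stateContent T s
    · simp only [dif_pos hs, dif_pos hσ]
    · simp only [dif_neg hs]
      have hrv : rev T σ ∉ stateContent T v :=
        fun hx => not_both hM hσT h1 h2 v ⟨hσ, hx⟩
      simp only [dif_neg hrv, Subtype.mk.injEq]
      exact rev_rev hM hσT


end Media

open Media

/-- Theorem 8.1: for any token `τ` (with reverse `τ'`) and any state `s` of a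
medium, exactly one of `τ ∈ ŝ` and `τ' ∈ ŝ` holds. Consequently, the contents
of any two states are equinumerous. -/
theorem token_xor_reverse_in_content {S : Type u} {T : Set (S → S)}
    (hM : IsMedium T) :
    (∀ τ ∈ T, ∀ τ' ∈ T, IsReverse τ τ' → ∀ s : S,
      Xor' (τ ∈ stateContent T s) (τ' ∈ stateContent T s)) ∧
    (∀ s v : S, Nonempty (↥(stateContent T s) ≃ ↥(stateContent T v))) :=
  ⟨fun τ hτ τ' hτ' h s => xor_content hM hτ hτ' h s,
   fun s v => ⟨contentEquiv hM s v⟩⟩
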